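/- Let G be a nontrivial finite group. If G is homogeneous of rank n, then r(G) = n, i.e., n is the least length of a generating sequence of G. -/
import Mathlib


/-- `(x₁,…,xₙ)` is a generating sequence of `G`: the entries generate `G`. -/
def IsGenSeq {G : Type*} [Group G] {n : ℕ} (x : Fin n → G) : Prop :=
  Subgroup.closure (Set.range x) = ⊤

/-- `r(G)`: the least `n` such that `G` has a generating sequence of length `n`. -/
noncomputable def grank (G : Type*) [Group G] : ℕ :=
  sInf {n : ℕ | ∃ x : Fin n → G, IsGenSeq x}

/-- `G` is homogeneous of rank `n`: `Γ_n(G)` is nonempty and `Aut(G)` acts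
transitively on it. -/
def IsHomogeneous (G : Type*) [Group G] (n : ℕ) : Prop :=
  (∃ x : Fin n → G, IsGenSeq x) ∧
    ∀ x y : Fin n → G, IsGenSeq x → IsGenSeq y → ∃ f : G ≃* G, ∀ i, f (x i) = y i

/-- A nontrivial finite homogeneous group of rank `n` satisfies `r(G) = n`. -/
theorem grank_eq_of_isHomogeneous (G : Type*) [Group G] [Finite G] [Nontrivial G] (n : ℕ)
    (h : IsHomogeneous G n) : grank G = n := by
  obtain ⟨⟨x₀, hx₀⟩, htrans⟩ := h
  have hmem : n ∈ {n : ℕ | ∃ x : Fin n → G, IsGenSeq x} := ⟨x₀, hx₀⟩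
  have hle : grank G ≤ n := Nat.sInf_le hmem
  rcases lt_or_eq_of_le hle with hlt | heq
  · exfalso
    set m := grank G with hm
    obtain ⟨x, hx⟩ : ∃ x : Fin m → G, IsGenSeq x :=
      Nat.sInf_mem ⟨n, hmem⟩
    obtain ⟨g, hg⟩ := exists_ne (1 : G)
    set z : Fin n → G := fun i => if h : (i : ℕ) < m then x ⟨i, h⟩ else 1 with hz
    set z' : Fin n → G := fun i => if h : (i : ℕ) < m then x ⟨i, h⟩ else g with hz'
    have hsub : ∀ (w : Fin n → G), (∀ (i : Fin n) (hi : (i : ℕ) < m), w i = x ⟨i, hi⟩) →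
        IsGenSeq w := by
      intro w hw
      have : Set.range x ⊆ Set.range w := by
        rintro a ⟨j, rfl⟩
        exact ⟨⟨j, j.2.trans hlt⟩, by rw [hw _ j.2]⟩
      have := Subgroup.closure_mono this
      rw [hx] at this
      exact top_le_iff.mp this
    have hz1 : IsGenSeq z := hsub z (fun i hi => by simp [hz, hi])
    have hz2 : IsGenSeq z' := hsub z' (fun i hi => by simp [hz', hi])
    obtain ⟨f, hf⟩ := htrans z z' hz1 hz2
    have hn : 0 < n := lt_of_le_of_lt (Nat.zero_le m) hlt
    have hnm : ¬ ((⟨n - 1, Nat.sub_lt hn one_pos⟩ : Fin n) : ℕ) < m := by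
      simp only [Fin.val_mk]
      omega
    have := hf ⟨n - 1, Nat.sub_lt hn one_pos⟩
    rw [show z ⟨n - 1, Nat.sub_lt hn one_pos⟩ = 1 from dif_neg hnm,
      show z' ⟨n - 1, Nat.sub_lt hn one_pos⟩ = g from dif_neg hnm, map_one] at this
    exact hg.symm this
  · exact heq
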